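/- Let (X, δ) be a diversity. For every finite Y ⊆ X and every f ∈ T_X, δ_T(κ(Y) ∪ {f}) = f(Y), where κ(x) = h_x with h_x(A) = δ(A ∪ {x}). -/

import Mathlib

open scoped Classical

noncomputable section

/-- A diversity: axioms (D1) and (D2). -/
def IsDiversity {X : Type*} (δ : Finset X → ℝ) : Prop :=
  (∀ A, 0 ≤ δ A) ∧ (∀ A, δ A = 0 ↔ A.card ≤ 1) ∧
    ∀ A B C : Finset X, B ≠ ∅ → δ (A ∪ C) ≤ δ (A ∪ B) + δ (B ∪ C)

/-- Membership in `P_X`: `f ∅ = 0` and `Σ_{A ∈ 𝓐} f A ≥ δ (⋃ 𝓐)` for every finite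
collection `𝓐` of finite subsets of `X`. -/
def MemP {X : Type*} (δ : Finset X → ℝ) (f : Finset X → ℝ) : Prop :=
  f ∅ = 0 ∧ ∀ 𝓐 : Finset (Finset X), δ (𝓐.sup id) ≤ ∑ A ∈ 𝓐, f A

/-- Membership in the tight span `T_X`: the pointwise-minimal elements of `P_X`. -/
def MemT {X : Type*} (δ : Finset X → ℝ) (f : Finset X → ℝ) : Prop :=
  MemP δ f ∧ ∀ g : Finset X → ℝ, MemP δ g → (∀ A, g A ≤ f A) → g = f

/-- The function `δ_T` on finite subsets of the tight span: `δ_T ∅ = 0` and for nonempty `F`,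
`δ_T F = sup { δ(⋃𝓐) - Σ_{A ∈ 𝓐} inf_{f ∈ F} f A : 𝓐 a finite collection of finite subsets }`. -/
noncomputable def deltaT {X : Type*} (δ : Finset X → ℝ) (F : Finset (Finset X → ℝ)) : ℝ :=
  if F = ∅ then 0
  else sSup {r : ℝ | ∃ 𝓐 : Finset (Finset X),
    r = δ (𝓐.sup id) - ∑ A ∈ 𝓐, sInf ((fun f => f A) '' (F : Set (Finset X → ℝ)))}

/-- The Kuratowski-type map `κ` sends `x` to the function `h_x : A ↦ δ (A ∪ {x})`. -/
def hfun {X : Type*} (δ : Finset X → ℝ) (x : X) : Finset X → ℝ :=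
  fun A => δ (A ∪ {x})

section Aux

variable {X : Type*} {δ : Finset X → ℝ} {f : Finset X → ℝ}

lemma div_empty (hδ : IsDiversity δ) : δ (∅ : Finset X) = 0 :=
  (hδ.2.1 ∅).2 (by simp)

lemma div_singleton (hδ : IsDiversity δ) (x : X) : δ {x} = 0 :=
  (hδ.2.1 {x}).2 (by simp)

lemma div_le_insert (hδ : IsDiversity δ) (A : Finset X) (a : X) :
    δ A ≤ δ (insert a A) := by
  have h := hδ.2.2 ∅ {a} A (by simp)
  simpa [div_singleton hδ, ← Finset.insert_eq] using h

lemma div_mono (hδ : IsDiversity δ) {A B : Finset X} (h : A ⊆ B) : δ A ≤ δ B := by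
  classical
  have key : ∀ s : Finset X, δ A ≤ δ (A ∪ s) := by
    intro s
    induction s using Finset.induction_on with
    | empty => simp
    | @insert a s ha ih =>
      calc δ A ≤ δ (A ∪ s) := ih
        _ ≤ δ (insert a (A ∪ s)) := div_le_insert hδ _ _
        _ = δ (A ∪ insert a s) := by rw [Finset.union_insert]
  have := key B
  rwa [Finset.union_eq_right.mpr h] at this

lemma memP_ge (hf : MemP δ f) (A : Finset X) : δ A ≤ f A := by
  have := hf.2 {A}
  simpa using this

lemma memP_nonneg (hδ : IsDiversity δ) (hf : MemP δ f) (A : Finset X) : 0 ≤ f A :=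
  (hδ.1 A).trans (memP_ge hf A)

/-- Repeated triangle inequality: replace each block `A ∈ 𝓑` by a point `y A ∈ T`. -/
lemma div_chain (hδ : IsDiversity δ) (T : Finset X) (y : Finset X → X) :
    ∀ 𝓑 : Finset (Finset X), (∀ A ∈ 𝓑, y A ∈ T) →
      δ (T ∪ 𝓑.sup id) ≤ δ T + ∑ A ∈ 𝓑, δ (A ∪ {y A}) := by
  classical
  intro 𝓑
  induction 𝓑 using Finset.induction_on with
  | empty => intro _; simp
  | @insert A 𝓑 hA ih =>
    intro hy
    have hyA : y A ∈ T := hy A (Finset.mem_insert_self _ _)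
    have ih' := ih (fun B hB => hy B (Finset.mem_insert_of_mem hB))
    have hsup : (insert A 𝓑).sup id = A ∪ 𝓑.sup id := by
      rw [Finset.sup_insert]; rfl
    have htri := hδ.2.2 (T ∪ 𝓑.sup id) {y A} A (by simp)
    have h1 : (T ∪ 𝓑.sup id) ∪ {y A} = T ∪ 𝓑.sup id :=
      Finset.union_eq_left.mpr (Finset.singleton_subset_iff.mpr
        (Finset.mem_union_left _ hyA))
    have h2 : ({y A} : Finset X) ∪ A = A ∪ {y A} := Finset.union_comm _ _
    rw [h1, h2] at htri
    have h3 : T ∪ (insert A 𝓑).sup id = (T ∪ 𝓑.sup id) ∪ A := by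
      rw [hsup]
      rw [Finset.union_comm A (𝓑.sup id), ← Finset.union_assoc]
    rw [h3, Finset.sum_insert hA]
    linarith

/-- Upper bound: every term in the supremum defining `δ_T (κ(Y) ∪ {f})` is at most `f Y`. -/
lemma key_upper (hδ : IsDiversity δ) (Y : Finset X) (f : Finset X → ℝ) (hfP : MemP δ f)
    (𝓐 : Finset (Finset X)) :
    δ (𝓐.sup id) ≤ f Y + ∑ A ∈ 𝓐,
      sInf ((fun g => g A) ''
        ((insert f (Y.image (hfun δ)) : Finset (Finset X → ℝ)) : Set (Finset X → ℝ))) := by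
  classical
  set F : Finset (Finset X → ℝ) := insert f (Y.image (hfun δ)) with hF
  set m : Finset X → ℝ := fun A => sInf ((fun g => g A) '' (F : Set (Finset X → ℝ))) with hm
  have hfF : f ∈ F := Finset.mem_insert_self _ _
  have hmmem : ∀ A : Finset X, ∃ g ∈ F, g A = m A := by
    intro A
    have hne : ((fun g => g A) '' (F : Set (Finset X → ℝ))).Nonempty :=
      ⟨f A, f, by exact_mod_cast hfF, rfl⟩
    have hfin : ((fun g => g A) '' (F : Set (Finset X → ℝ))).Finite :=
      (F.finite_toSet).image _
    obtain ⟨g, hg, hgA⟩ := hne.csInf_mem hfin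
    exact ⟨g, by exact_mod_cast hg, hgA⟩
  rcases Finset.eq_empty_or_nonempty Y with hY | hY
  · -- Y = ∅ : F = {f}, m A = f A
    subst hY
    have hmf : ∀ A, m A = f A := by
      intro A
      have : (F : Set (Finset X → ℝ)) = {f} := by simp [hF]
      rw [hm]
      simp [this]
    have h0 : f (∅ : Finset X) = 0 := hfP.1
    calc δ (𝓐.sup id) ≤ ∑ A ∈ 𝓐, f A := hfP.2 𝓐
      _ = f ∅ + ∑ A ∈ 𝓐, m A := by rw [h0]; simp [hmf]
  · obtain ⟨y0, hy0⟩ := hY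
    -- classify each A according to whether the inf is attained by some h_y
    set P : Finset X → Prop := fun A => ∃ y, y ∈ Y ∧ m A = δ (A ∪ {y}) with hPdef
    have hPf : ∀ A, ¬ P A → m A = f A := by
      intro A hnP
      obtain ⟨g, hg, hgA⟩ := hmmem A
      rw [hF, Finset.mem_insert] at hg
      rcases hg with rfl | hg
      · exact hgA.symm
      · obtain ⟨y, hyY, rfl⟩ := Finset.mem_image.mp hg
        exact absurd ⟨y, hyY, hgA.symm⟩ hnP
    set 𝓐₂ : Finset (Finset X) := 𝓐.filter P with h𝓐₂
    set 𝓐₁ : Finset (Finset X) := 𝓐.filter (fun A => ¬ P A) with h𝓐₁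
    set yfun : Finset X → X := fun A => if h : P A then h.choose else y0 with hyfun
    have hy2 : ∀ A ∈ 𝓐₂, yfun A ∈ Y ∧ m A = δ (A ∪ {yfun A}) := by
      intro A hA
      have hPA : P A := (Finset.mem_filter.mp hA).2
      have := hPA.choose_spec
      simp only [hyfun, dif_pos hPA]
      exact this
    set T : Finset X := Y ∪ 𝓐₁.sup id with hT
    have hsplit : 𝓐₁ ∪ 𝓐₂ = 𝓐 := by
      rw [h𝓐₁, h𝓐₂, Finset.union_comm]
      exact Finset.filter_union_filter_not_eq P 𝓐
    -- step 1 : monotonicity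
    have hstep1 : δ (𝓐.sup id) ≤ δ (T ∪ 𝓐₂.sup id) := by
      apply div_mono hδ
      rw [← hsplit, Finset.sup_union, Finset.sup_eq_union]
      intro x hx
      rw [Finset.mem_union] at hx ⊢
      rcases hx with hx | hx
      · exact Or.inl (by rw [hT]; exact Finset.mem_union_right _ hx)
      · exact Or.inr hx
    -- step 2 : chain
    have hstep2 : δ (T ∪ 𝓐₂.sup id) ≤ δ T + ∑ A ∈ 𝓐₂, m A := by
      have := div_chain hδ T yfun 𝓐₂ (fun A hA => by
        rw [hT]; exact Finset.mem_union_left _ (hy2 A hA).1)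
      calc δ (T ∪ 𝓐₂.sup id) ≤ δ T + ∑ A ∈ 𝓐₂, δ (A ∪ {yfun A}) := this
        _ = δ T + ∑ A ∈ 𝓐₂, m A := by
            congr 1
            exact Finset.sum_congr rfl (fun A hA => ((hy2 A hA).2).symm)
    -- step 3 : bound δ T using MemP of f
    have hstep3 : δ T ≤ f Y + ∑ A ∈ 𝓐₁, m A := by
      have hmf : ∑ A ∈ 𝓐₁, m A = ∑ A ∈ 𝓐₁, f A :=
        Finset.sum_congr rfl (fun A hA => hPf A (Finset.mem_filter.mp hA).2)
      have h2 := hfP.2 (insert Y 𝓐₁)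
      have hsup : (insert Y 𝓐₁).sup id = T := by
        rw [Finset.sup_insert]; rfl
      rw [hsup] at h2
      by_cases hY1 : Y ∈ 𝓐₁
      · rw [Finset.insert_eq_self.mpr hY1] at h2
        have := memP_nonneg hδ hfP Y
        rw [hmf]; linarith
      · rw [Finset.sum_insert hY1] at h2
        rw [hmf]; linarith
    -- combine
    have hsum : ∑ A ∈ 𝓐₁, m A + ∑ A ∈ 𝓐₂, m A = ∑ A ∈ 𝓐, m A := by
      rw [← hsplit, Finset.sum_union]
      rw [h𝓐₁, h𝓐₂]
      exact (Finset.disjoint_filter_filter_not 𝓐 𝓐 P).symm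
    linarith

/-- By minimality of `f` in `P_X`, `f Y` is approximated by `δ(Y ∪ ⋃𝓐) - Σ_{A∈𝓐} f A`. -/
lemma exists_approx (hδ : IsDiversity δ) (hf : MemT δ f) (Y : Finset X)
    {ε : ℝ} (hε : 0 < ε) :
    ∃ 𝓐 : Finset (Finset X), Y ∉ 𝓐 ∧
      f Y - ε < δ (Y ∪ 𝓐.sup id) - ∑ A ∈ 𝓐, f A := by
  classical
  set T : Set ℝ := {r | ∃ 𝓐 : Finset (Finset X), Y ∉ 𝓐 ∧
      r = δ (Y ∪ 𝓐.sup id) - ∑ A ∈ 𝓐, f A} with hTdef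
  have hne : T.Nonempty := ⟨δ Y, ∅, by simp, by simp⟩
  have hub : ∀ r ∈ T, r ≤ f Y := by
    rintro r ⟨𝓐, hY𝓐, rfl⟩
    have h2 := hf.1.2 (insert Y 𝓐)
    rw [Finset.sup_insert, Finset.sum_insert hY𝓐] at h2
    simp only [id, Finset.sup_eq_union] at h2
    linarith
  have hbdd : BddAbove T := ⟨f Y, hub⟩
  set s : ℝ := sSup T with hsdef
  have hδY_le : δ Y ≤ s := le_csSup hbdd ⟨∅, by simp, by simp⟩
  have hs_le : s ≤ f Y := csSup_le hne hub
  set g : Finset X → ℝ := fun A => if A = Y then s else f A with hgdef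
  have hg0 : g ∅ = 0 := by
    by_cases hYe : Y = ∅
    · have h1 : g ∅ = s := by simp [hgdef, hYe]
      have h2 : f Y = 0 := by rw [hYe]; exact hf.1.1
      have h3 : 0 ≤ δ Y := hδ.1 Y
      rw [h1]; linarith
    · simp only [hgdef]
      rw [if_neg (Ne.symm hYe)]
      exact hf.1.1
  have hgP : MemP δ g := by
    refine ⟨hg0, fun 𝓑 => ?_⟩
    by_cases hYB : Y ∈ 𝓑
    · have hrep : 𝓑 = insert Y (𝓑.erase Y) := (Finset.insert_erase hYB).symm
      have hsum : ∑ A ∈ 𝓑, g A = s + ∑ A ∈ 𝓑.erase Y, f A := by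
        conv_lhs => rw [hrep]
        rw [Finset.sum_insert (Finset.notMem_erase _ _)]
        congr 1
        · simp [hgdef]
        · exact Finset.sum_congr rfl (fun A hA => by
            simp [hgdef, Finset.ne_of_mem_erase hA])
      have hmem : δ (Y ∪ (𝓑.erase Y).sup id) - ∑ A ∈ 𝓑.erase Y, f A ∈ T :=
        ⟨𝓑.erase Y, Finset.notMem_erase _ _, rfl⟩
      have hle := le_csSup hbdd hmem
      have hsupB : 𝓑.sup id = Y ∪ (𝓑.erase Y).sup id := by
        conv_lhs => rw [hrep]
        rw [Finset.sup_insert]; rfl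
      rw [hsupB, hsum]
      linarith
    · have heqs : ∑ A ∈ 𝓑, g A = ∑ A ∈ 𝓑, f A :=
        Finset.sum_congr rfl (fun A hA => by
          have hAY : A ≠ Y := fun h => hYB (h ▸ hA)
          simp [hgdef, hAY])
      rw [heqs]
      exact hf.1.2 𝓑
  have hgle : ∀ A, g A ≤ f A := by
    intro A
    by_cases h : A = Y
    · subst h; simpa [hgdef] using hs_le
    · simp [hgdef, h]
  have heq : g = f := hf.2 g hgP hgle
  have hsY : s = f Y := by
    have := congrFun heq Y
    simpa [hgdef] using this
  have hlt : f Y - ε < sSup T := by rw [← hsdef, hsY]; linarith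
  obtain ⟨r, ⟨𝓐, hY𝓐, rfl⟩, hr⟩ := exists_lt_of_lt_csSup hne hlt
  exact ⟨𝓐, hY𝓐, hr⟩

end Aux

/-- for every finite `Y ⊆ X` and `f ∈ T_X`, `δ_T (κ(Y) ∪ {f}) = f Y`. -/
theorem deltaT_kappa_insert {X : Type*} (δ : Finset X → ℝ) (hδ : IsDiversity δ)
    (Y : Finset X) (f : Finset X → ℝ) (hf : MemT δ f) :
    deltaT δ (insert f (Y.image (hfun δ))) = f Y := by
  classical
  set F : Finset (Finset X → ℝ) := insert f (Y.image (hfun δ)) with hF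
  set m : Finset X → ℝ := fun A => sInf ((fun g => g A) '' (F : Set (Finset X → ℝ))) with hm
  have hfF : f ∈ F := Finset.mem_insert_self _ _
  set S : Set ℝ := {r : ℝ | ∃ 𝓐 : Finset (Finset X),
      r = δ (𝓐.sup id) - ∑ A ∈ 𝓐, m A} with hSdef
  have hdT : deltaT δ F = sSup S := by
    rw [deltaT, if_neg (Finset.insert_ne_empty _ _)]
  have hS0 : (0 : ℝ) ∈ S := ⟨∅, by simp [div_empty hδ]⟩
  have hub : ∀ r ∈ S, r ≤ f Y := by
    rintro r ⟨𝓐, rfl⟩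
    have := key_upper hδ Y f hf.1 𝓐
    rw [← hF, ← hm] at this
    linarith
  have hbdd : BddAbove S := ⟨f Y, hub⟩
  have hfin : ∀ A : Finset X, ((fun g => g A) '' (F : Set (Finset X → ℝ))).Finite :=
    fun A => (F.finite_toSet).image _
  have hmle : ∀ A : Finset X, ∀ g ∈ F, m A ≤ g A := by
    intro A g hg
    exact csInf_le (hfin A).bddBelow (Set.mem_image_of_mem _ (by exact_mod_cast hg))
  have hm0 : ∀ A : Finset X, 0 ≤ m A := by
    intro A
    have hne' : ((fun g => g A) '' (F : Set (Finset X → ℝ))).Nonempty :=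
      ⟨f A, Set.mem_image_of_mem _ (by exact_mod_cast hfF)⟩
    apply le_csInf hne'
    rintro b ⟨g, hg, rfl⟩
    have hg' : g ∈ F := by exact_mod_cast hg
    rw [hF, Finset.mem_insert] at hg'
    rcases hg' with rfl | hg'
    · exact memP_nonneg hδ hf.1 A
    · obtain ⟨y, _, rfl⟩ := Finset.mem_image.mp hg'
      exact hδ.1 _
  rw [hdT]
  apply le_antisymm (csSup_le ⟨0, hS0⟩ hub)
  apply le_of_forall_sub_le
  intro ε hε
  obtain ⟨𝓐, hY𝓐, happrox⟩ := exists_approx hδ hf Y hε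
  set 𝓑 : Finset (Finset X) := 𝓐 ∪ Y.image (fun y => ({y} : Finset X)) with h𝓑
  have hsup𝓑 : 𝓑.sup id = Y ∪ 𝓐.sup id := by
    rw [h𝓑, Finset.sup_union, Finset.sup_image]
    have : (Finset.sup Y (id ∘ fun y => ({y} : Finset X))) = Y := Finset.sup_singleton_eq_self Y
    rw [this, Finset.sup_eq_union, Finset.union_comm]
  have hr𝓑 : δ (𝓑.sup id) - ∑ A ∈ 𝓑, m A ∈ S := ⟨𝓑, rfl⟩
  have hsum1 : ∑ A ∈ 𝓑, m A ≤ ∑ A ∈ 𝓐, m A + ∑ B ∈ Y.image (fun y => ({y} : Finset X)), m B := by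
    have h := Finset.sum_union_inter (s₁ := 𝓐) (s₂ := Y.image (fun y => ({y} : Finset X))) (f := m)
    have hpos : 0 ≤ ∑ A ∈ 𝓐 ∩ Y.image (fun y => ({y} : Finset X)), m A :=
      Finset.sum_nonneg (fun A _ => hm0 A)
    rw [← h𝓑] at h
    linarith
  have hsum2 : ∑ A ∈ 𝓐, m A ≤ ∑ A ∈ 𝓐, f A :=
    Finset.sum_le_sum (fun A _ => hmle A f hfF)
  have hsum3 : ∑ B ∈ Y.image (fun y => ({y} : Finset X)), m B ≤ 0 := by
    apply Finset.sum_nonpos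
    intro B hB
    obtain ⟨y, hyY, rfl⟩ := Finset.mem_image.mp hB
    have hh : hfun δ y ∈ F := by
      rw [hF, Finset.mem_insert]
      exact Or.inr (Finset.mem_image_of_mem _ hyY)
    have := hmle {y} (hfun δ y) hh
    have hval : hfun δ y {y} = 0 := by
      show δ ({y} ∪ {y}) = 0
      rw [Finset.union_self]
      exact div_singleton hδ y
    linarith
  have hfinal : f Y - ε ≤ δ (𝓑.sup id) - ∑ A ∈ 𝓑, m A := by
    rw [hsup𝓑]
    linarith
  exact hfinal.trans (le_csSup hbdd hr𝓑)

end
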